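/- Let f: [0,1] → ℝ be continuous, x ∈ [0,1], and let (pₙ, qₙ) ∈ ℕ × ℕ* be a sequence with pₙ/qₙ ∈ [0,1], qₙ → ∞ and pₙ/qₙ → x. Then ∫₀¹ ρ_{pₙ, qₙ−pₙ}(s) f(s) ds → f(x) as n → ∞. -/

import Mathlib

/-- The density of the Beta distribution `Be(k+1, l+1)` on `[0,1]`. -/
noncomputable def rho (k l : ℕ) (s : ℝ) : ℝ :=
  ((k + l + 1).factorial : ℝ) / (k.factorial * l.factorial) * s ^ k * (1 - s) ^ l

open intervalIntegral Filter


lemma Ibeta : ∀ (b a : ℕ), ∫ s in (0:ℝ)..1, s ^ a * (1 - s) ^ b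
    = (a.factorial * b.factorial : ℝ) / (a + b + 1).factorial := by
  intro b
  induction b with
  | zero =>
    intro a
    simp only [pow_zero, mul_one, integral_pow, one_pow, Nat.factorial_zero, Nat.cast_one,
      add_zero, Nat.factorial_succ]
    have h1 : (a.factorial : ℝ) ≠ 0 := Nat.cast_ne_zero.mpr a.factorial_ne_zero
    have h2 : (a : ℝ) + 1 ≠ 0 := by positivity
    rw [zero_pow (Nat.succ_ne_zero a)]
    field_simp
    push_cast; ring
  | succ b IH =>
    intro a
    have hu : ∀ s ∈ Set.uIcc (0:ℝ) 1, HasDerivAt (fun y : ℝ => (1 - y) ^ (b + 1))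
        (-(((b:ℝ) + 1) * (1 - s) ^ b)) s := by
      intro s _
      have h := ((hasDerivAt_id s).const_sub 1).pow (b + 1)
      simp only [id_eq, Nat.add_sub_cancel] at h
      exact h.congr_deriv (by push_cast; ring)
    have hv : ∀ s ∈ Set.uIcc (0:ℝ) 1, HasDerivAt (fun y : ℝ => y ^ (a + 1) / ((a:ℝ) + 1))
        (s ^ a) s := by
      intro s _
      have h := (hasDerivAt_pow (a + 1) s).div_const ((a:ℝ) + 1)
      have ha : (a:ℝ) + 1 ≠ 0 := by positivity
      exact h.congr_deriv (by rw [Nat.add_sub_cancel]; push_cast; field_simp)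
    have hiu : IntervalIntegrable (fun s : ℝ => -(((b:ℝ) + 1) * (1 - s) ^ b))
        MeasureTheory.volume 0 1 := (by fun_prop : Continuous _).intervalIntegrable 0 1
    have hiv : IntervalIntegrable (fun s : ℝ => s ^ a) MeasureTheory.volume 0 1 :=
      (by fun_prop : Continuous _).intervalIntegrable 0 1
    have key := integral_mul_deriv_eq_deriv_mul hu hv hiu hiv
    have e1 : (∫ s in (0:ℝ)..1, s ^ a * (1 - s) ^ (b + 1))
        = ∫ s in (0:ℝ)..1, (1 - s) ^ (b + 1) * s ^ a := by
      congr 1; ext s; ring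
    have e2 : (∫ s in (0:ℝ)..1, -(((b:ℝ) + 1) * (1 - s) ^ b) * (s ^ (a + 1) / ((a:ℝ) + 1)))
        = (-(((b:ℝ) + 1) / ((a:ℝ) + 1))) * ∫ s in (0:ℝ)..1, s ^ (a + 1) * (1 - s) ^ b := by
      rw [← integral_const_mul]
      congr 1; ext s; ring
    rw [e1, key, e2, IH (a + 1)]
    have h1 : (a.factorial : ℝ) ≠ 0 := Nat.cast_ne_zero.mpr a.factorial_ne_zero
    have h2 : (b.factorial : ℝ) ≠ 0 := Nat.cast_ne_zero.mpr b.factorial_ne_zero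
    have h3 : ((a + b + 2).factorial : ℝ) ≠ 0 := Nat.cast_ne_zero.mpr (a + b + 2).factorial_ne_zero
    have ha : (a:ℝ) + 1 ≠ 0 := by positivity
    have ea : (a + 1 + b + 1) = a + b + 2 := by omega
    have eb : (a + (b + 1) + 1) = a + b + 2 := by omega
    rw [ea, eb, Nat.factorial_succ (b), Nat.factorial_succ a]
    push_cast
    field_simp
    ring


lemma rho_cont (k l : ℕ) : Continuous (rho k l) := by
  unfold rho; fun_prop

lemma rho_pow (k l j : ℕ) : ∫ s in (0:ℝ)..1, rho k l s * s ^ j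
    = ((k + l + 1).factorial : ℝ) * (k + j).factorial
      / (k.factorial * (k + j + l + 1).factorial) := by
  have e : (∫ s in (0:ℝ)..1, rho k l s * s ^ j)
      = ((k + l + 1).factorial : ℝ) / (k.factorial * l.factorial)
        * ∫ s in (0:ℝ)..1, s ^ (k + j) * (1 - s) ^ l := by
    rw [← integral_const_mul]
    congr 1; ext s; unfold rho; rw [pow_add]; ring
  rw [e, Ibeta]
  have h1 : (k.factorial : ℝ) ≠ 0 := Nat.cast_ne_zero.mpr k.factorial_ne_zero
  have h2 : (l.factorial : ℝ) ≠ 0 := Nat.cast_ne_zero.mpr l.factorial_ne_zero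
  have h3 : ((k + j + l + 1).factorial : ℝ) ≠ 0 :=
    Nat.cast_ne_zero.mpr (k + j + l + 1).factorial_ne_zero
  field_simp

lemma rho_m0 (k l : ℕ) : ∫ s in (0:ℝ)..1, rho k l s = 1 := by
  have h := rho_pow k l 0
  simp only [pow_zero, mul_one, add_zero] at h
  rw [h]
  have h1 : (k.factorial : ℝ) ≠ 0 := Nat.cast_ne_zero.mpr k.factorial_ne_zero
  have h3 : ((k + l + 1).factorial : ℝ) ≠ 0 := Nat.cast_ne_zero.mpr (k + l + 1).factorial_ne_zero
  field_simp

lemma rho_m1 (k l : ℕ) : ∫ s in (0:ℝ)..1, rho k l s * s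
    = ((k:ℝ) + 1) / ((k:ℝ) + (l:ℝ) + 2) := by
  have h := rho_pow k l 1
  simp only [pow_one] at h
  rw [h]
  rw [show k + 1 + l + 1 = (k + l + 1) + 1 by omega, Nat.factorial_succ (k + l + 1),
    Nat.factorial_succ k]
  have h1 : (k.factorial : ℝ) ≠ 0 := Nat.cast_ne_zero.mpr k.factorial_ne_zero
  have h3 : ((k + l + 1).factorial : ℝ) ≠ 0 := Nat.cast_ne_zero.mpr (k + l + 1).factorial_ne_zero
  have h4 : ((k:ℝ) + (l:ℝ) + 2) ≠ 0 := by positivity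
  push_cast
  field_simp
  ring

lemma rho_m2 (k l : ℕ) : ∫ s in (0:ℝ)..1, rho k l s * s ^ 2
    = (((k:ℝ) + 1) * ((k:ℝ) + 2)) / (((k:ℝ) + (l:ℝ) + 2) * ((k:ℝ) + (l:ℝ) + 3)) := by
  have h := rho_pow k l 2
  rw [h]
  rw [show k + 2 + l + 1 = ((k + l + 1) + 1) + 1 by omega, show k + 2 = (k + 1) + 1 by omega,
    Nat.factorial_succ ((k + l + 1) + 1), Nat.factorial_succ (k + l + 1),
    Nat.factorial_succ (k + 1), Nat.factorial_succ k]
  have h1 : (k.factorial : ℝ) ≠ 0 := Nat.cast_ne_zero.mpr k.factorial_ne_zero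
  have h3 : ((k + l + 1).factorial : ℝ) ≠ 0 := Nat.cast_ne_zero.mpr (k + l + 1).factorial_ne_zero
  have h4 : ((k:ℝ) + (l:ℝ) + 2) ≠ 0 := by positivity
  have h5 : ((k:ℝ) + (l:ℝ) + 3) ≠ 0 := by positivity
  push_cast
  field_simp
  ring

lemma rho_var (k l : ℕ) (x : ℝ) : ∫ s in (0:ℝ)..1, rho k l s * (s - x) ^ 2
    = x ^ 2 - 2 * x * (((k:ℝ) + 1) / ((k:ℝ) + (l:ℝ) + 2))
      + (((k:ℝ) + 1) * ((k:ℝ) + 2)) / (((k:ℝ) + (l:ℝ) + 2) * ((k:ℝ) + (l:ℝ) + 3)) := by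
  have e : (fun s : ℝ => rho k l s * (s - x) ^ 2)
      = fun s : ℝ => (rho k l s * s ^ 2 - (2 * x) * (rho k l s * s)) + (x ^ 2) * rho k l s := by
    ext s; ring
  have c2 : IntervalIntegrable (fun s : ℝ => rho k l s * s ^ 2) MeasureTheory.volume 0 1 :=
    ((rho_cont k l).mul (by fun_prop)).intervalIntegrable 0 1
  have c1 : IntervalIntegrable (fun s : ℝ => (2 * x) * (rho k l s * s)) MeasureTheory.volume 0 1 :=
    (continuous_const.mul ((rho_cont k l).mul (by fun_prop))).intervalIntegrable 0 1
  have c0 : IntervalIntegrable (fun s : ℝ => (x ^ 2) * rho k l s) MeasureTheory.volume 0 1 :=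
    (continuous_const.mul (rho_cont k l)).intervalIntegrable 0 1
  rw [e, integral_add (c2.sub c1) c0, integral_sub c2 c1, integral_const_mul,
    integral_const_mul, rho_m0, rho_m1, rho_m2]
  ring


lemma rho_nonneg (k l : ℕ) {s : ℝ} (hs : s ∈ Set.Icc (0:ℝ) 1) : 0 ≤ rho k l s := by
  obtain ⟨h0, h1⟩ := hs
  unfold rho
  have : (0:ℝ) ≤ 1 - s := by linarith
  positivity

theorem stmt_7 (f : ℝ → ℝ) (hf : ContinuousOn f (Set.Icc (0:ℝ) 1))
    (x : ℝ) (hx : x ∈ Set.Icc (0:ℝ) 1)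
    (p q : ℕ → ℕ) (hq : ∀ n, 0 < q n)
    (hpq : ∀ n, (p n : ℝ) / (q n : ℝ) ∈ Set.Icc (0:ℝ) 1)
    (hqt : Filter.Tendsto q Filter.atTop Filter.atTop)
    (hxa : Filter.Tendsto (fun n => (p n : ℝ) / (q n : ℝ)) Filter.atTop (nhds x)) :
    Filter.Tendsto (fun n => ∫ s in (0:ℝ)..1, rho (p n) (q n - p n) s * f s)
      Filter.atTop (nhds (f x)) := by
  have hqpos : ∀ n, (0:ℝ) < q n := fun n => by exact_mod_cast hq n
  have hple : ∀ n, p n ≤ q n := by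
    intro n
    have h := (hpq n).2
    rw [div_le_one (hqpos n)] at h
    exact_mod_cast h
  -- the second moment of rho (p n) (q n - p n) about x
  set V : ℕ → ℝ := fun n =>
    x ^ 2 - 2 * x * (((p n : ℝ) + 1) / ((q n : ℝ) + 2))
      + (((p n : ℝ) + 1) / ((q n : ℝ) + 2)) * (((p n : ℝ) + 2) / ((q n : ℝ) + 3)) with hV
  have hVint : ∀ n, ∫ s in (0:ℝ)..1, rho (p n) (q n - p n) s * (s - x) ^ 2 = V n := by
    intro n
    rw [rho_var, Nat.cast_sub (hple n), hV]
    have h2 : ((q n : ℝ) + 2) ≠ 0 := by positivity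
    have h3 : ((q n : ℝ) + 3) ≠ 0 := by positivity
    field_simp
    rw [show (p n:ℝ) + ((q n:ℝ) - p n) = q n by ring]
    field_simp
  -- V → 0
  have hqR : Tendsto (fun n => (q n : ℝ)) atTop atTop :=
    tendsto_natCast_atTop_atTop.comp hqt
  have hinv : Tendsto (fun n => 1 / (q n : ℝ)) atTop (nhds 0) :=
    tendsto_inv_atTop_zero.comp hqR |>.congr (fun n => (one_div _).symm)
  have hm1 : Tendsto (fun n => ((p n : ℝ) + 1) / ((q n : ℝ) + 2)) atTop (nhds x) := by
    have heq : ∀ n, ((p n : ℝ) + 1) / ((q n : ℝ) + 2)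
        = ((p n : ℝ) / (q n : ℝ) + 1 / (q n : ℝ)) / (1 + 2 * (1 / (q n : ℝ))) := by
      intro n
      have h0 : (q n : ℝ) ≠ 0 := (hqpos n).ne'
      have h2 : ((q n : ℝ) + 2) ≠ 0 := by positivity
      field_simp
    have hnum : Tendsto (fun n => (p n : ℝ) / (q n : ℝ) + 1 / (q n : ℝ)) atTop (nhds (x + 0)) :=
      hxa.add hinv
    have hden : Tendsto (fun n => 1 + 2 * (1 / (q n : ℝ))) atTop (nhds (1 + 2 * 0)) :=
      tendsto_const_nhds.add (hinv.const_mul 2)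
    have h := hnum.div hden (by norm_num)
    rw [show (x + 0) / (1 + 2 * 0) = x by norm_num] at h
    exact h.congr (fun n => (heq n).symm)
  have hm2 : Tendsto (fun n => ((p n : ℝ) + 2) / ((q n : ℝ) + 3)) atTop (nhds x) := by
    have heq : ∀ n, ((p n : ℝ) + 2) / ((q n : ℝ) + 3)
        = ((p n : ℝ) / (q n : ℝ) + 2 * (1 / (q n : ℝ))) / (1 + 3 * (1 / (q n : ℝ))) := by
      intro n
      have h0 : (q n : ℝ) ≠ 0 := (hqpos n).ne'
      have h3 : ((q n : ℝ) + 3) ≠ 0 := by positivity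
      field_simp
    have hnum : Tendsto (fun n => (p n : ℝ) / (q n : ℝ) + 2 * (1 / (q n : ℝ))) atTop
        (nhds (x + 2 * 0)) := hxa.add (hinv.const_mul 2)
    have hden : Tendsto (fun n => 1 + 3 * (1 / (q n : ℝ))) atTop (nhds (1 + 3 * 0)) :=
      tendsto_const_nhds.add (hinv.const_mul 3)
    have h := hnum.div hden (by norm_num)
    rw [show (x + 2 * 0) / (1 + 3 * 0) = x by norm_num] at h
    exact h.congr (fun n => (heq n).symm)
  have hVt : Tendsto V atTop (nhds 0) := by
    rw [hV, show (0:ℝ) = x ^ 2 - 2 * x * x + x * x by ring]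
    exact (tendsto_const_nhds.sub (hm1.const_mul (2 * x))).add (hm1.mul hm2)
  -- bound & uniform continuity of f
  obtain ⟨M, hM⟩ := isCompact_Icc.exists_bound_of_continuousOn hf
  have hM0 : 0 ≤ M := le_trans (norm_nonneg _) (hM x hx)
  have huc := isCompact_Icc.uniformContinuousOn_of_continuous hf
  rw [Metric.uniformContinuousOn_iff] at huc
  rw [Metric.tendsto_atTop]
  intro ε hε
  obtain ⟨δ, hδ, hδ2⟩ := huc (ε / 2) (half_pos hε)
  set c : ℝ := 2 * M / δ ^ 2 with hc
  have hc0 : 0 ≤ c := by positivity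
  have hcV : Tendsto (fun n => c * V n) atTop (nhds 0) := by
    simpa using hVt.const_mul c
  obtain ⟨N, hN⟩ := (Metric.tendsto_atTop.mp hcV) (ε / 2) (half_pos hε)
  refine ⟨N, fun n hn => ?_⟩
  have hIcc : Set.uIcc (0:ℝ) 1 = Set.Icc (0:ℝ) 1 := Set.uIcc_of_le zero_le_one
  have hIrf : IntervalIntegrable (fun s => rho (p n) (q n - p n) s * f s) MeasureTheory.volume 0 1 := by
    apply ContinuousOn.intervalIntegrable
    rw [hIcc]
    exact (rho_cont (p n) (q n - p n)).continuousOn.mul hf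
  -- rewrite difference
  have hdiff : (∫ s in (0:ℝ)..1, rho (p n) (q n - p n) s * f s) - f x
      = ∫ s in (0:ℝ)..1, rho (p n) (q n - p n) s * (f s - f x) := by
    have e : (fun s => rho (p n) (q n - p n) s * (f s - f x))
        = fun s => rho (p n) (q n - p n) s * f s - f x * rho (p n) (q n - p n) s := by ext s; ring
    rw [e, integral_sub (g := fun s => f x * rho (p n) (q n - p n) s) hIrf
      ((continuous_const.mul (rho_cont (p n) (q n - p n))).intervalIntegrable 0 1),
      integral_const_mul, rho_m0]
    ring
  -- pointwise bound
  have hpt : ∀ s ∈ Set.Icc (0:ℝ) 1,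
      |rho (p n) (q n - p n) s * (f s - f x)| ≤ rho (p n) (q n - p n) s * (ε / 2 + c * (s - x) ^ 2) := by
    intro s hs
    rw [abs_mul, abs_of_nonneg (rho_nonneg (p n) (q n - p n) hs)]
    apply mul_le_mul_of_nonneg_left _ (rho_nonneg (p n) (q n - p n) hs)
    by_cases hsx : |s - x| < δ
    · have := hδ2 s hs x hx (by rwa [Real.dist_eq])
      rw [Real.dist_eq] at this
      nlinarith [sq_nonneg (s - x), mul_nonneg hc0 (sq_nonneg (s - x))]
    · push_neg at hsx
      have h1 : |f s - f x| ≤ 2 * M := by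
        calc |f s - f x| ≤ |f s| + |f x| := abs_sub _ _
          _ ≤ M + M := add_le_add (hM s hs) (hM x hx)
          _ = 2 * M := by ring
      have h2 : δ ^ 2 ≤ (s - x) ^ 2 := by
        rw [← sq_abs (s - x)]
        exact pow_le_pow_left₀ hδ.le hsx 2
      have h3 : 2 * M ≤ c * (s - x) ^ 2 := by
        have : c * δ ^ 2 ≤ c * (s - x) ^ 2 := mul_le_mul_of_nonneg_left h2 hc0
        have hδ2' : δ ^ 2 ≠ 0 := by positivity
        rw [hc] at this ⊢
        calc 2 * M = 2 * M / δ ^ 2 * δ ^ 2 := by field_simp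
          _ ≤ _ := this
      linarith [half_pos hε]
  -- integral bound
  have hIabs : IntervalIntegrable (fun s => |rho (p n) (q n - p n) s * (f s - f x)|)
      MeasureTheory.volume 0 1 := by
    apply ContinuousOn.intervalIntegrable
    rw [hIcc]
    exact ((rho_cont (p n) (q n - p n)).continuousOn.mul (hf.sub continuousOn_const)).abs
  have hIrhs : IntervalIntegrable (fun s => rho (p n) (q n - p n) s * (ε / 2 + c * (s - x) ^ 2))
      MeasureTheory.volume 0 1 :=
    ((rho_cont (p n) (q n - p n)).mul (by fun_prop)).intervalIntegrable 0 1
  have hbound : |∫ s in (0:ℝ)..1, rho (p n) (q n - p n) s * (f s - f x)| ≤ ε / 2 + c * V n := by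
    calc |∫ s in (0:ℝ)..1, rho (p n) (q n - p n) s * (f s - f x)|
        ≤ ∫ s in (0:ℝ)..1, |rho (p n) (q n - p n) s * (f s - f x)| :=
          intervalIntegral.abs_integral_le_integral_abs zero_le_one
      _ ≤ ∫ s in (0:ℝ)..1, rho (p n) (q n - p n) s * (ε / 2 + c * (s - x) ^ 2) := by
          apply intervalIntegral.integral_mono_on zero_le_one hIabs hIrhs
          exact hpt
      _ = ε / 2 + c * V n := by
          have e : (fun s => rho (p n) (q n - p n) s * (ε / 2 + c * (s - x) ^ 2))
              = fun s => (ε / 2) * rho (p n) (q n - p n) s + c * (rho (p n) (q n - p n) s * (s - x) ^ 2) := by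
            ext s; ring
          have hcont2 : Continuous (fun s : ℝ => rho (p n) (q n - p n) s * (s - x) ^ 2) :=
            (rho_cont (p n) (q n - p n)).mul (by fun_prop)
          rw [e, integral_add (f := fun s => (ε / 2) * rho (p n) (q n - p n) s)
            (g := fun s => c * (rho (p n) (q n - p n) s * (s - x) ^ 2))
            ((continuous_const.mul (rho_cont (p n) (q n - p n))).intervalIntegrable 0 1)
            ((continuous_const.mul hcont2).intervalIntegrable 0 1),
            integral_const_mul, integral_const_mul, rho_m0, hVint n]
          ring
  have hNn := hN n hn
  rw [Real.dist_eq, sub_zero] at hNn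
  rw [Real.dist_eq, hdiff]
  calc |∫ s in (0:ℝ)..1, rho (p n) (q n - p n) s * (f s - f x)| ≤ ε / 2 + c * V n := hbound
    _ ≤ ε / 2 + |c * V n| := add_le_add_right (le_abs_self _) _
    _ < ε / 2 + ε / 2 := by linarith
    _ = ε := by ring
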